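/- The sequence c_k := ∑_{m≥0} (k+1)(k-1)/[k(m+1)(m+k)·binom(m+2+1/k, m+1)] · (2 - (k-2)/(m+k-1)) satisfies c_k → 1 as k → ∞. -/

import Mathlib

open Filter

/-- Generalized binomial coefficient `binom(x, n) = x(x-1)⋯(x-n+1)/n!`. -/
noncomputable def gbinom (x : ℝ) (n : ℕ) : ℝ :=
  (∏ i ∈ Finset.range n, (x - i)) / (Nat.factorial n)

/-- The limiting expected local clustering coefficient `c_k` of a random node in a
random ordered increasing `k`-tree. -/
noncomputable def cLim (k : ℕ) : ℝ :=
  ∑' m : ℕ,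
    ((k : ℝ) + 1) * ((k : ℝ) - 1)
      / ((k : ℝ) * ((m : ℝ) + 1) * ((m : ℝ) + k) * gbinom ((m : ℝ) + 2 + 1 / (k : ℝ)) (m + 1))
      * (2 - ((k : ℝ) - 2) / ((m : ℝ) + (k : ℝ) - 1))

lemma prod_desc : ∀ (n j : ℕ), ∏ i ∈ Finset.range n, ((j:ℝ) + n - i) = (j+n).factorial / j.factorial := by
  intro n
  induction n with
  | zero => intro j; simp [div_self (by positivity : (j.factorial:ℝ) ≠ 0)]
  | succ n ih =>
    intro j
    rw [Finset.prod_range_succ]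
    have h1 : ∀ i : ℕ, ((j:ℝ) + (n+1) - i) = ((j+1:ℕ):ℝ) + n - i := by intro i; push_cast; ring
    have := ih (j+1)
    calc (∏ i ∈ Finset.range n, ((j:ℝ) + (n+1:ℕ) - i)) * ((j:ℝ) + (n+1:ℕ) - n)
        = ((j+1+n).factorial / (j+1).factorial) * (j+1) := by
          rw [← this]
          congr 1
          · exact Finset.prod_congr rfl (fun i _ => by push_cast; ring)
          · push_cast; ring
      _ = (j+(n+1)).factorial / j.factorial := by
          rw [show j+1+n = j+(n+1) by ring, Nat.factorial_succ j]
          have hj : (j.factorial:ℝ) ≠ 0 := by positivity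
          have hj1 : ((j:ℝ)+1) ≠ 0 := by positivity
          push_cast
          field_simp

lemma hasSum_g : HasSum (fun m : ℕ => 1/(((m:ℝ)+1)*((m:ℝ)+2))) 1 := by
  rw [hasSum_iff_tendsto_nat_of_nonneg (fun m => by positivity)]
  have h : ∀ n : ℕ, ∑ m ∈ Finset.range n, 1/(((m:ℝ)+1)*((m:ℝ)+2)) = 1 - 1/((n:ℝ)+1) := by
    intro n
    induction n with
    | zero => simp
    | succ n ih =>
      rw [Finset.sum_range_succ, ih]
      have h1 : ((n:ℝ)+1) ≠ 0 := by positivity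
      have h2 : ((n:ℝ)+2) ≠ 0 := by positivity
      push_cast
      field_simp
      ring
  simp_rw [h]
  have : Tendsto (fun n : ℕ => 1/((n:ℝ)+1)) atTop (nhds 0) := tendsto_one_div_add_atTop_nhds_zero_nat
  simpa using (tendsto_const_nhds (x := (1:ℝ))).sub this

noncomputable def Fc (m : ℕ) (t : ℝ) : ℝ :=
  (1+t)*(1-t) / ((1+m*t) * ((m:ℝ)+1) *
      ((∏ i ∈ Finset.range (m+1), ((m:ℝ)+2+t-(i:ℝ))) / (Nat.factorial (m+1))))
    * (2 - (1-2*t)/(1+((m:ℝ)-1)*t))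

lemma prod0 (m : ℕ) : (∏ i ∈ Finset.range (m+1), ((m:ℝ)+2+0-(i:ℝ))) = (m+2).factorial := by
  have := prod_desc (m+1) 1
  simp only [Nat.factorial_one] at this
  rw [show (1:ℕ)+(m+1) = m+2 by ring] at this
  rw [show ((1:ℕ):ℝ) = 1 by norm_num, div_one] at this
  rw [← this]
  apply Finset.prod_congr rfl
  intro i _
  push_cast
  ring

lemma Fc_tendsto (m : ℕ) :
    Tendsto (Fc m) (nhds 0) (nhds (1/(((m:ℝ)+1)*((m:ℝ)+2)))) := by
  have hP : Continuous (fun t : ℝ => ∏ i ∈ Finset.range (m+1), ((m:ℝ)+2+t-(i:ℝ))) := by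
    apply continuous_finset_prod
    intro i _
    continuity
  have hfact : ((m+1).factorial : ℝ) ≠ 0 := by positivity
  have hP0 : (∏ i ∈ Finset.range (m+1), ((m:ℝ)+2+0-(i:ℝ))) = (m+2).factorial := prod0 m
  have hca : ContinuousAt (Fc m) 0 := by
    unfold Fc
    apply ContinuousAt.mul
    · apply ContinuousAt.div
      · fun_prop
      · exact ((((continuous_const.add (continuous_const.mul continuous_id)).mul
          continuous_const).mul (hP.div_const _)).continuousAt)
      · have hP0' : (∏ x ∈ Finset.range (m+1), ((m:ℝ)+2-(x:ℝ))) = (m+2).factorial := by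
          rw [← hP0]; exact Finset.prod_congr rfl (fun i _ => by ring)
        simp only [mul_zero, add_zero, hP0']
        have h3 : ((m+2).factorial : ℝ) > 0 := by positivity
        positivity
    · apply ContinuousAt.sub continuousAt_const
      apply ContinuousAt.div (by fun_prop) (by fun_prop)
      simp
  have hval : Fc m 0 = 1/(((m:ℝ)+1)*((m:ℝ)+2)) := by
    unfold Fc
    rw [hP0]
    have h1 : ((m+1).factorial : ℝ) ≠ 0 := hfact
    have h2 : ((m+2).factorial : ℝ) = ((m:ℝ)+2) * (m+1).factorial := by
      rw [show m+2 = (m+1)+1 by ring, Nat.factorial_succ]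
      push_cast; ring
    rw [h2]
    field_simp
    ring
  rw [← hval]
  exact hca.tendsto

noncomputable def cTerm (k m : ℕ) : ℝ :=
  ((k : ℝ) + 1) * ((k : ℝ) - 1)
      / ((k : ℝ) * ((m : ℝ) + 1) * ((m : ℝ) + k) * gbinom ((m : ℝ) + 2 + 1 / (k : ℝ)) (m + 1))
      * (2 - ((k : ℝ) - 2) / ((m : ℝ) + (k : ℝ) - 1))

lemma hP_pos (k m : ℕ) (hk : 2 ≤ k) :
    0 < ∏ i ∈ Finset.range (m+1), ((m:ℝ)+2+1/(k:ℝ)-(i:ℝ)) := by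
  apply Finset.prod_pos
  intro i hi
  have hi' : (i:ℝ) ≤ m := by
    have := Nat.lt_succ_iff.mp (Finset.mem_range.mp hi)
    exact_mod_cast this
  have : (0:ℝ) ≤ 1/(k:ℝ) := by positivity
  linarith

set_option maxHeartbeats 1000000 in
lemma cTerm_eq (k m : ℕ) (hk : 2 ≤ k) : cTerm k m = Fc m (1/(k:ℝ)) := by
  have hk2 : (2:ℝ) ≤ (k:ℝ) := by exact_mod_cast hk
  have hk0 : (0:ℝ) < (k:ℝ) := by linarith
  have hm : (0:ℝ) ≤ (m:ℝ) := Nat.cast_nonneg m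
  have hP := hP_pos k m hk
  have hfact : ((m+1).factorial : ℝ) ≠ 0 := by positivity
  unfold cTerm Fc gbinom
  have hmk1 : (0:ℝ) < (m:ℝ)+(k:ℝ)-1 := by linarith
  have h2 : (0:ℝ) < 1+((m:ℝ)-1)*(1/(k:ℝ)) := by
    rw [show 1+((m:ℝ)-1)*(1/(k:ℝ)) = ((k:ℝ)+(m:ℝ)-1)/(k:ℝ) by field_simp; ring]
    apply div_pos (by linarith) hk0
  have h1 : (0:ℝ) < 1+(m:ℝ)*(1/(k:ℝ)) := by positivity
  have hPne : (∏ i ∈ Finset.range (m+1), ((m:ℝ)+2+1/(k:ℝ)-(i:ℝ))) ≠ 0 := ne_of_gt hP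
  generalize hPgen : (∏ i ∈ Finset.range (m+1), ((m:ℝ)+2+1/(k:ℝ)-(i:ℝ))) = P at hPne hP
  have hk0' : (k:ℝ) ≠ 0 := ne_of_gt hk0
  have hmk1' : (m:ℝ)+(k:ℝ)-1 ≠ 0 := ne_of_gt hmk1
  have h2' : 1+((m:ℝ)-1)*(1/(k:ℝ)) ≠ 0 := ne_of_gt h2
  have h1' : 1+(m:ℝ)*(1/(k:ℝ)) ≠ 0 := ne_of_gt h1
  have hfactpos : (0:ℝ) < ((m+1).factorial : ℝ) := by positivity
  have hPf : (0:ℝ) < P / ((m+1).factorial : ℝ) := div_pos hP hfactpos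
  have hm1 : (0:ℝ) < (m:ℝ)+1 := by positivity
  have hmk : (0:ℝ) < (m:ℝ)+(k:ℝ) := by linarith
  have hden1 : (k:ℝ)*((m:ℝ)+1)*((m:ℝ)+(k:ℝ))*(P/((m+1).factorial:ℝ)) ≠ 0 :=
    ne_of_gt (mul_pos (mul_pos (mul_pos hk0 hm1) hmk) hPf)
  have hden2 : (1+(m:ℝ)*(1/(k:ℝ)))*((m:ℝ)+1)*(P/((m+1).factorial:ℝ)) ≠ 0 :=
    ne_of_gt (mul_pos (mul_pos h1 hm1) hPf)
  congr 1
  · rw [div_eq_div_iff hden1 hden2]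
    field_simp
    ring
  · congr 1
    rw [div_eq_div_iff hmk1' h2']
    field_simp
    ring

lemma cTerm_bound (k m : ℕ) (hk : 2 ≤ k) :
    ‖cTerm k m‖ ≤ 2/(((m:ℝ)+1)*((m:ℝ)+2)) := by
  have hk2 : (2:ℝ) ≤ (k:ℝ) := by exact_mod_cast hk
  have hk0 : (0:ℝ) < (k:ℝ) := by linarith
  have hm : (0:ℝ) ≤ (m:ℝ) := Nat.cast_nonneg m
  have hP := hP_pos k m hk
  have hfact : (0:ℝ) < ((m+1).factorial : ℝ) := by positivity
  set Q := gbinom ((m:ℝ)+2+1/(k:ℝ)) (m+1) with hQdef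
  have hQ : ((m:ℝ)+2) ≤ Q := by
    have hprodle : ((m+2).factorial : ℝ) ≤ ∏ i ∈ Finset.range (m+1), ((m:ℝ)+2+1/(k:ℝ)-(i:ℝ)) := by
      rw [← prod0 m]
      apply Finset.prod_le_prod
      · intro i hi
        have hi' : (i:ℝ) ≤ m := by
          exact_mod_cast Nat.lt_succ_iff.mp (Finset.mem_range.mp hi)
        linarith
      · intro i hi
        have : (0:ℝ) ≤ 1/(k:ℝ) := by positivity
        linarith
    have h2 : ((m+2).factorial : ℝ) = ((m:ℝ)+2) * (m+1).factorial := by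
      rw [show m+2 = (m+1)+1 by ring, Nat.factorial_succ]
      push_cast; ring
    rw [hQdef]
    unfold gbinom
    rw [le_div_iff₀ hfact]
    calc ((m:ℝ)+2) * (m+1).factorial = ((m+2).factorial : ℝ) := h2.symm
      _ ≤ _ := hprodle
  have hQ0 : (0:ℝ) < Q := lt_of_lt_of_le (by positivity) hQ
  have hB : (0:ℝ) < (k:ℝ)*((m:ℝ)+1)*((m:ℝ)+k)*Q := by positivity
  have hmk1 : (0:ℝ) < (m:ℝ)+(k:ℝ)-1 := by linarith
  have hC0 : (0:ℝ) ≤ 2 - ((k:ℝ)-2)/((m:ℝ)+(k:ℝ)-1) := by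
    have : ((k:ℝ)-2)/((m:ℝ)+(k:ℝ)-1) ≤ 1 := by
      rw [div_le_one hmk1]; linarith
    linarith
  have hC2 : 2 - ((k:ℝ)-2)/((m:ℝ)+(k:ℝ)-1) ≤ 2 := by
    have : (0:ℝ) ≤ ((k:ℝ)-2)/((m:ℝ)+(k:ℝ)-1) := by
      apply div_nonneg (by linarith) (le_of_lt hmk1)
    linarith
  have hA : (0:ℝ) ≤ ((k:ℝ)+1)*((k:ℝ)-1) := by nlinarith
  have hterm0 : (0:ℝ) ≤ cTerm k m := by
    unfold cTerm
    rw [← hQdef]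
    exact mul_nonneg (div_nonneg hA (le_of_lt hB)) hC0
  have hAB : ((k:ℝ)+1)*((k:ℝ)-1) / ((k:ℝ)*((m:ℝ)+1)*((m:ℝ)+k)*Q) ≤ 1/(((m:ℝ)+1)*((m:ℝ)+2)) := by
    rw [div_le_div_iff₀ hB (by positivity)]
    have e1 : ((k:ℝ)+1)*((k:ℝ)-1) ≤ (k:ℝ)*((m:ℝ)+(k:ℝ)) := by nlinarith
    have e2 : ((m:ℝ)+1)*((m:ℝ)+2) ≤ ((m:ℝ)+1)*Q := by
      apply mul_le_mul_of_nonneg_left hQ (by positivity)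
    calc ((k:ℝ)+1)*((k:ℝ)-1)*(((m:ℝ)+1)*((m:ℝ)+2))
        ≤ ((k:ℝ)*((m:ℝ)+(k:ℝ)))*(((m:ℝ)+1)*Q) := by
          apply mul_le_mul e1 e2 (by positivity) (by positivity)
      _ = 1*((k:ℝ)*((m:ℝ)+1)*((m:ℝ)+(k:ℝ))*Q) := by ring
  rw [Real.norm_of_nonneg hterm0]
  unfold cTerm
  rw [← hQdef]
  calc ((k:ℝ)+1)*((k:ℝ)-1) / ((k:ℝ)*((m:ℝ)+1)*((m:ℝ)+k)*Q) * (2 - ((k:ℝ)-2)/((m:ℝ)+(k:ℝ)-1))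
      ≤ ((k:ℝ)+1)*((k:ℝ)-1) / ((k:ℝ)*((m:ℝ)+1)*((m:ℝ)+k)*Q) * 2 := by
        apply mul_le_mul_of_nonneg_left hC2 (div_nonneg hA (le_of_lt hB))
    _ ≤ 1/(((m:ℝ)+1)*((m:ℝ)+2)) * 2 := by
        apply mul_le_mul_of_nonneg_right hAB (by norm_num)
    _ = 2/(((m:ℝ)+1)*((m:ℝ)+2)) := by ring


/-- `c_k → 1` as `k → ∞`. -/
theorem ktree_clustering_limit : Tendsto cLim atTop (nhds 1) := by
  have hsum : Summable (fun m : ℕ => 2/(((m:ℝ)+1)*((m:ℝ)+2))) := by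
    have h := (hasSum_g.summable).mul_left 2
    exact h.congr (fun m => by ring)
  have htend : ∀ m : ℕ, Tendsto (fun k : ℕ => cTerm k m) atTop
      (nhds (1/(((m:ℝ)+1)*((m:ℝ)+2)))) := by
    intro m
    have h0 : Tendsto (fun k : ℕ => (1:ℝ)/(k:ℝ)) atTop (nhds 0) :=
      tendsto_one_div_atTop_nhds_zero_nat
    refine ((Fc_tendsto m).comp h0).congr' ?_
    filter_upwards [eventually_ge_atTop 2] with k hk
    exact (cTerm_eq k m hk).symm
  have hbound : ∀ᶠ k : ℕ in atTop, ∀ m : ℕ, ‖cTerm k m‖ ≤ 2/(((m:ℝ)+1)*((m:ℝ)+2)) := by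
    filter_upwards [eventually_ge_atTop 2] with k hk m
    exact cTerm_bound k m hk
  have hmain := tendsto_tsum_of_dominated_convergence hsum htend hbound
  have h1 : (∑' m : ℕ, 1/(((m:ℝ)+1)*((m:ℝ)+2))) = 1 := hasSum_g.tsum_eq
  rw [h1] at hmain
  have hc : cLim = fun k : ℕ => ∑' m : ℕ, cTerm k m := rfl
  rw [hc]
  exact hmain
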